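/- Let $\Delta$ be a pure $d$-dimensional simplicial complex with a labelling $[n]$ on its vertices satisfying: (a) the proper interval condition, and (b) for each facet $F: i_1 \dots i_{d+1}$ and each $j \notin F$ with $i_1 \leq j \leq i_{d+1}$, some facet contains both $j$ and $i_k$ for some $k$. Then $\Delta$ is a unit interval simplicial complex with respect to the same labelling: whenever $\{i_1 < \dots < i_{d+1}\}$ is a facet and $i_1 \leq j_1 < \dots < j_{d+1} \leq i_{d+1}$, the set $\{j_1, \dots, j_{d+1}\}$ is a facet. -/
import Mathlib


/-- Unit interval condition (w.r.t. the natural labelling) for the facet family `F` of a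
pure `d`-complex on `[n]`: whenever `s : i₁ < … < i_{d+1}` is a facet and
`i₁ ≤ j₁ < … < j_{d+1} ≤ i_{d+1}`, the set `{j₁, …, j_{d+1}}` is a facet. -/
def UnitIntervalCond {n : ℕ} (d : ℕ) (F : Finset (Finset (Fin n))) : Prop :=
  ∀ s ∈ F, ∀ t : Finset (Fin n), t.card = d + 1 →
    (∃ a ∈ s, ∃ b ∈ s, ∀ j ∈ t, a ≤ j ∧ j ≤ b) → t ∈ F

/-- Proper interval condition (w.r.t. the natural labelling): for each facet
`s : i₁ < … < i_{d+1}` and each `j ∉ s` with `i₁ ≤ j ≤ i_{d+1}`, if some facet contains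
both `j` and `i_k`, then `{i₁, …, î_k, …, i_{d+1}, j}` is a facet. -/
def ProperIntervalCond {n : ℕ} (d : ℕ) (F : Finset (Finset (Fin n))) : Prop :=
  ∀ s ∈ F, ∀ j : Fin n, j ∉ s → (∃ a ∈ s, a ≤ j) → (∃ b ∈ s, j ≤ b) →
    ∀ k ∈ s, (∃ H ∈ F, j ∈ H ∧ k ∈ H) → insert j (s.erase k) ∈ F


/-- if the facet family `F` of a pure `d`-complex satisfies (a) the proper
interval condition and (b) for each facet `s` and each `j ∉ s` between the least and the
greatest vertex of `s` there is a facet containing `j` and some vertex of `s`, then `F`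
satisfies the unit interval condition with the same labelling. -/
theorem stmt_5 (d n : ℕ) (F : Finset (Finset (Fin n)))
    (hpure : ∀ s ∈ F, s.card = d + 1)
    (hproper : ProperIntervalCond d F)
    (hb : ∀ s ∈ F, ∀ j : Fin n, j ∉ s → (∃ a ∈ s, a ≤ j) → (∃ b ∈ s, j ≤ b) →
      ∃ k ∈ s, ∃ H ∈ F, j ∈ H ∧ k ∈ H) :
    UnitIntervalCond d F := by
  -- Swap lemma: any k ∈ s may be exchanged for an in-range j ∉ s.
  have swap : ∀ s ∈ F, ∀ j : Fin n, j ∉ s → (∃ a ∈ s, a ≤ j) → (∃ b ∈ s, j ≤ b) →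
      ∀ k ∈ s, insert j (s.erase k) ∈ F := by
    intro s hs j hj ha hb' k hk
    obtain ⟨k₀, hk₀, H, hH, hjH, hkH⟩ := hb s hs j hj ha hb'
    by_cases hkk : k = k₀
    · exact hproper s hs j hj ha hb' k hk ⟨H, hH, hjH, hkk ▸ hkH⟩
    · have hs0 : insert j (s.erase k₀) ∈ F :=
        hproper s hs j hj ha hb' k₀ hk₀ ⟨H, hH, hjH, hkH⟩
      exact hproper s hs j hj ha hb' k hk ⟨_, hs0, Finset.mem_insert_self _ _,
        Finset.mem_insert_of_mem (Finset.mem_erase.mpr ⟨hkk, hk⟩)⟩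
  have key : ∀ m : ℕ, ∀ s ∈ F, ∀ t : Finset (Fin n), t.card = d + 1 →
      (∃ a ∈ s, ∃ b ∈ s, ∀ j ∈ t, a ≤ j ∧ j ≤ b) → (t \ s).card = m → t ∈ F := by
    intro m
    induction m using Nat.strong_induction_on with
    | _ m ih =>
      intro s hs t ht hbd hcard
      obtain ⟨a, haS, b, hbS, hab⟩ := hbd
      rcases Nat.eq_zero_or_pos m with hm0 | hmpos
      · -- t ⊆ s and equal cardinalities, so t = s
        subst hm0
        have hsub : t ⊆ s := by
          rwa [Finset.card_eq_zero, Finset.sdiff_eq_empty_iff_subset] at hcard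
        have hcards : s.card ≤ t.card := by rw [ht, hpure s hs]
        rwa [Finset.eq_of_subset_of_card_le hsub hcards]
      · have hne_ts : (t \ s).Nonempty := Finset.card_pos.mp (hcard ▸ hmpos)
        have hne_st : (s \ t).Nonempty := by
          rw [← Finset.card_pos, Finset.card_sdiff_comm (by rw [ht, hpure s hs]), hcard]
          exact hmpos
        have hne_s : s.Nonempty := by
          rw [← Finset.card_pos, hpure s hs]; omega
        set j := (t \ s).min' hne_ts with hj_def
        set k := (s \ t).min' hne_st with hk_def
        have hjts : j ∈ t \ s := Finset.min'_mem _ _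
        have hkst : k ∈ s \ t := Finset.min'_mem _ _
        obtain ⟨hjt, hjs⟩ := Finset.mem_sdiff.mp hjts
        obtain ⟨hks, hkt⟩ := Finset.mem_sdiff.mp hkst
        have haj : a ≤ j := (hab j hjt).1
        have hjb : j ≤ b := (hab j hjt).2
        have hs' : insert j (s.erase k) ∈ F :=
          swap s hs j hjs ⟨a, haS, haj⟩ ⟨b, hbS, hjb⟩ k hks
        by_cases hkmax : k = s.max' hne_s
        · -- then s \ t = {k}, t \ s = {j}, and the swap produces exactly t
          have hcard_st : (s \ t).card = 1 := by
            by_contra hne1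
            have h2 : 1 < (s \ t).card := by
              have := Finset.card_pos.mpr hne_st; omega
            have hlt := Finset.min'_lt_max'_of_card (s \ t) h2
            have hmax_mem : (s \ t).max' hne_st ∈ s :=
              (Finset.mem_sdiff.mp (Finset.max'_mem _ _)).1
            have : (s \ t).max' hne_st ≤ s.max' hne_s := Finset.le_max' _ _ hmax_mem
            rw [← hkmax] at this
            exact absurd (lt_of_lt_of_le hlt this) (lt_irrefl _)
          have hst_eq : s \ t = {k} := by
            obtain ⟨x, hx⟩ := Finset.card_eq_one.mp hcard_st
            rw [hx] at hkst ⊢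
            rw [Finset.mem_singleton.mp hkst]
          have hts_eq : t \ s = {j} := by
            have h1 : (t \ s).card = 1 := by
              rw [← Finset.card_sdiff_comm (by rw [hpure s hs, ht]), hcard_st]
            obtain ⟨x, hx⟩ := Finset.card_eq_one.mp h1
            rw [hx] at hjts ⊢
            rw [Finset.mem_singleton.mp hjts]
          have : insert j (s.erase k) = t := by
            ext x
            simp only [Finset.mem_insert, Finset.mem_erase]
            constructor
            · rintro (rfl | ⟨hxk, hxs⟩)
              · exact hjt
              · by_contra hxt
                have : x ∈ s \ t := Finset.mem_sdiff.mpr ⟨hxs, hxt⟩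
                rw [hst_eq, Finset.mem_singleton] at this
                exact hxk this
            · intro hxt
              by_cases hxs : x ∈ s
              · exact Or.inr ⟨fun h => hkt (h ▸ hxt), hxs⟩
              · have : x ∈ t \ s := Finset.mem_sdiff.mpr ⟨hxt, hxs⟩
                rw [hts_eq, Finset.mem_singleton] at this
                exact Or.inl this
          rwa [this] at hs'
        · -- recurse: |t \ s'| = m - 1, bounds min t and max s survive
          have hmaxs' : s.max' hne_s ∈ insert j (s.erase k) :=
            Finset.mem_insert_of_mem (Finset.mem_erase.mpr
              ⟨fun h => hkmax h.symm, Finset.max'_mem _ _⟩)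
          have hne_t : t.Nonempty := by rw [← Finset.card_pos, ht]; omega
          have hmint' : t.min' hne_t ∈ insert j (s.erase k) := by
            by_cases hmins : t.min' hne_t ∈ s
            · exact Finset.mem_insert_of_mem (Finset.mem_erase.mpr
                ⟨fun h => hkt (h ▸ Finset.min'_mem t hne_t), hmins⟩)
            · have hm_ts : t.min' hne_t ∈ t \ s :=
                Finset.mem_sdiff.mpr ⟨Finset.min'_mem t hne_t, hmins⟩
              have h1 : j ≤ t.min' hne_t := Finset.min'_le _ _ hm_ts
              have h2 : t.min' hne_t ≤ j := Finset.min'_le _ _ hjt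
              have : t.min' hne_t = j := le_antisymm h2 h1
              rw [this]; exact Finset.mem_insert_self _ _
          have hts' : t \ insert j (s.erase k) = (t \ s).erase j := by
            ext x
            simp only [Finset.mem_sdiff, Finset.mem_insert, Finset.mem_erase]
            constructor
            · rintro ⟨hxt, hx⟩
              push_neg at hx
              obtain ⟨hxj, hx2⟩ := hx
              exact ⟨hxj, hxt, fun hxs => hx2 (fun h => hkt (h ▸ hxt)) hxs⟩
            · rintro ⟨hxj, hxt, hxs⟩
              exact ⟨hxt, by push_neg; exact ⟨hxj, fun _ => hxs⟩⟩
          have hcard' : (t \ insert j (s.erase k)).card = m - 1 := by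
            rw [hts', Finset.card_erase_of_mem hjts, hcard]
          refine ih (m - 1) (by omega) _ hs' t ht
            ⟨t.min' hne_t, hmint', s.max' hne_s, hmaxs', fun x hx =>
              ⟨Finset.min'_le _ _ hx, le_trans (hab x hx).2 (Finset.le_max' _ _ hbS)⟩⟩
            hcard'
  intro s hs t ht hbd
  exact key _ s hs t ht hbd rfl
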